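/- Let x be the nilpotent k×k Jordan block matrix (single Jordan block, eigenvalue 0) over a field of characteristic zero. Then the Lie subalgebra of gl_k generated by x together with its transpose xᵀ acts irreducibly on K^k. -/

import Mathlib

attribute [local instance] LieRing.ofAssociativeRing

/-- The Lie subalgebra of `gl_k` generated by the nilpotent Jordan block `x` and its
transpose acts irreducibly on `K^k`. -/
theorem jordan_block_and_transpose_irreducible
    (K : Type*) [Field K] [CharZero K]
    (k : ℕ) (hk : 1 ≤ k)
    (x : Matrix (Fin k) (Fin k) K)
    (hx : x = Matrix.of fun i j : Fin k => if (i : ℕ) + 1 = (j : ℕ) then (1 : K) else 0) :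
    ∀ W : Submodule K (Fin k → K),
      (∀ m ∈ LieSubalgebra.lieSpan K (Matrix (Fin k) (Fin k) K) {x, x.transpose},
        ∀ v ∈ W, m.mulVec v ∈ W) →
      W = ⊥ ∨ W = ⊤ := by
  intro W hW
  by_cases hbot : W = ⊥
  · exact Or.inl hbot
  right
  -- shift operators
  set L : (Fin k → K) → (Fin k → K) :=
    fun a i => if h : (i:ℕ)+1 < k then a ⟨(i:ℕ)+1, h⟩ else 0 with hLdef
  set R : (Fin k → K) → (Fin k → K) :=
    fun a i => if (i:ℕ) ≠ 0 then a ⟨(i:ℕ)-1, lt_of_le_of_lt (Nat.sub_le _ _) i.isLt⟩ else 0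
      with hRdef
  have hxmem : x ∈ LieSubalgebra.lieSpan K (Matrix (Fin k) (Fin k) K) {x, x.transpose} :=
    LieSubalgebra.subset_lieSpan (Set.mem_insert _ _)
  have hxtmem : x.transpose ∈ LieSubalgebra.lieSpan K (Matrix (Fin k) (Fin k) K)
      {x, x.transpose} :=
    LieSubalgebra.subset_lieSpan (Set.mem_insert_of_mem _ rfl)
  have hmulL : ∀ v : Fin k → K, x.mulVec v = L v := by
    intro v
    funext i
    simp only [Matrix.mulVec, dotProduct, hx, Matrix.of_apply, hLdef]
    beta_reduce
    by_cases h : (i:ℕ)+1 < k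
    · rw [dif_pos h]
      rw [Finset.sum_eq_single (⟨(i:ℕ)+1, h⟩ : Fin k)]
      · simp
      · intro b _ hb
        rw [if_neg, zero_mul]
        intro hcontra
        exact hb (by ext; exact hcontra.symm)
      · simp
    · rw [dif_neg h]
      apply Finset.sum_eq_zero
      intro b _
      rw [if_neg, zero_mul]
      intro hcontra
      exact h (hcontra ▸ b.isLt)
  have hmulR : ∀ v : Fin k → K, x.transpose.mulVec v = R v := by
    intro v
    funext i
    simp only [Matrix.mulVec, dotProduct, hx, Matrix.transpose_apply, Matrix.of_apply, hRdef]
    beta_reduce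
    by_cases h : (i:ℕ) ≠ 0
    · rw [if_pos h]
      rw [Finset.sum_eq_single (⟨(i:ℕ)-1, lt_of_le_of_lt (Nat.sub_le _ _) i.isLt⟩ : Fin k)]
      · rw [if_pos (by simp; omega), one_mul]
      · intro b _ hb
        rw [if_neg, zero_mul]
        intro hcontra
        exact hb (by ext; simp; omega)
      · simp
    · rw [if_neg h]
      apply Finset.sum_eq_zero
      intro b _
      rw [if_neg (by omega), zero_mul]
  have hWL : ∀ v ∈ W, L v ∈ W := fun v hv => hmulL v ▸ hW x hxmem v hv
  have hWR : ∀ v ∈ W, R v ∈ W := fun v hv => hmulR v ▸ hW x.transpose hxtmem v hv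
  have hWLi : ∀ (m : ℕ) (v), v ∈ W → L^[m] v ∈ W := by
    intro m
    induction m with
    | zero => simpa using fun v h => h
    | succ n ih =>
      intro v hv
      rw [Function.iterate_succ']
      exact hWL _ (ih v hv)
  have hWRi : ∀ (m : ℕ) (v), v ∈ W → R^[m] v ∈ W := by
    intro m
    induction m with
    | zero => simpa using fun v h => h
    | succ n ih =>
      intro v hv
      rw [Function.iterate_succ']
      exact hWR _ (ih v hv)
  have hLit : ∀ (m : ℕ) (v : Fin k → K) (i : Fin k),
      (L^[m] v) i = if h : (i:ℕ)+m < k then v ⟨(i:ℕ)+m, h⟩ else 0 := by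
    intro m
    induction m with
    | zero => simp
    | succ n ih =>
      intro v i
      rw [Function.iterate_succ', Function.comp_apply]
      show (if h : (i:ℕ)+1 < k then (L^[n] v) ⟨(i:ℕ)+1, h⟩ else 0) = _
      by_cases h : (i:ℕ)+(n+1) < k
      · rw [dif_pos (by omega), ih, dif_pos (by simpa using by omega : ((⟨(i:ℕ)+1, by omega⟩ : Fin k):ℕ)+n < k), dif_pos h]
        congr 1
        ext
        simp
        omega
      · rw [dif_neg h]
        by_cases h1 : (i:ℕ)+1 < k
        · rw [dif_pos h1, ih, dif_neg (by simp; omega)]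
        · rw [dif_neg h1]
  have hRit : ∀ (m : ℕ) (v : Fin k → K) (i : Fin k),
      (R^[m] v) i = if m ≤ (i:ℕ) then
        v ⟨(i:ℕ)-m, lt_of_le_of_lt (Nat.sub_le _ _) i.isLt⟩ else 0 := by
    intro m
    induction m with
    | zero => simp
    | succ n ih =>
      intro v i
      rw [Function.iterate_succ', Function.comp_apply]
      show (if (i:ℕ) ≠ 0 then (R^[n] v) ⟨(i:ℕ)-1, _⟩ else 0) = _
      by_cases h : n+1 ≤ (i:ℕ)
      · rw [if_pos (by omega), ih, if_pos (by simp; omega), if_pos h]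
        congr 1
        ext
        simp
        omega
      · rw [if_neg h]
        by_cases h1 : (i:ℕ) ≠ 0
        · rw [if_pos h1, ih, if_neg (by simp; omega)]
        · rw [if_neg h1]
  -- get nonzero vector
  obtain ⟨v, hvW, hvne⟩ := Submodule.exists_mem_ne_zero_of_ne_bot hbot
  obtain ⟨j, hj⟩ : ∃ j, v j ≠ 0 := Function.ne_iff.mp hvne
  -- concentrate at position k-1
  set w : Fin k → K := R^[k-1] (L^[(j:ℕ)] v) with hwdef
  have hwW : w ∈ W := hWRi _ _ (hWLi _ _ hvW)
  have hwval : ∀ i : Fin k, w i = if (i:ℕ) = k-1 then v j else 0 := by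
    intro i
    rw [hwdef, hRit]
    by_cases h : k-1 ≤ (i:ℕ)
    · rw [if_pos h, hLit, if_pos (by omega : (i:ℕ) = k-1)]
      rw [dif_pos (by simp; omega)]
      congr 1
      ext
      simp
      omega
    · rw [if_neg h, if_neg (by omega)]
  -- all scaled basis vectors in W
  have hsingle : ∀ i : Fin k, Pi.single i (v j) ∈ W := by
    intro i
    have hm : L^[k-1-(i:ℕ)] w ∈ W := hWLi _ _ hwW
    have : L^[k-1-(i:ℕ)] w = Pi.single i (v j) := by
      funext i'
      rw [hLit]
      rw [Pi.single_apply]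
      by_cases h : (i':ℕ) + (k-1-(i:ℕ)) < k
      · rw [dif_pos h, hwval]
        by_cases he : i' = i
        · rw [if_pos (by simp; omega), if_pos he]
        · rw [if_neg (by simp; intro hc; exact he (Fin.ext (by omega))), if_neg he]
      · rw [dif_neg h, if_neg (by intro he; subst he; omega)]
    rwa [this] at hm
  -- conclude W = ⊤
  rw [eq_top_iff]
  intro u _
  have hrep : u = ∑ i : Fin k, Pi.single i (u i) := (Finset.univ_sum_single u).symm
  rw [hrep]
  apply Submodule.sum_mem
  intro i _
  have : Pi.single i (u i) = (u i * (v j)⁻¹) • (Pi.single i (v j) : Fin k → K) := by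
    funext i'
    simp only [Pi.single_apply, Pi.smul_apply, smul_eq_mul]
    by_cases he : i' = i
    · rw [if_pos he, if_pos he]
      field_simp
    · rw [if_neg he, if_neg he, mul_zero]
  rw [this]
  exact Submodule.smul_mem _ _ (hsingle i)
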